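/- For every integer p ≥ 2, the polynomial v(τ) = (1+τ)^{p+2}(1−τ)^{p−2} satisfies the homogeneous Bianchi transport equation in the sector q = p for the component a₄, i.e. (1−τ²)·v''(τ) + (−4 + 2(p−1)τ)·v'(τ) + 2p·v(τ) = 0 for all real τ. -/

import Mathlib

lemma hasDerivAt_mixed (m n : ℕ) (t : ℝ) :
    HasDerivAt (fun t : ℝ => (1 + t) ^ m * (1 - t) ^ n)
      ((m : ℝ) * ((1 + t) ^ (m - 1) * (1 - t) ^ n)
        - (n : ℝ) * ((1 + t) ^ m * (1 - t) ^ (n - 1))) t := by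
  have h1 : HasDerivAt (fun t : ℝ => 1 + t) 1 t := (hasDerivAt_id t).const_add 1
  have h2 : HasDerivAt (fun t : ℝ => 1 - t) (-1) t := (hasDerivAt_id t).const_sub 1
  have this : HasDerivAt (fun t : ℝ => (1 + t) ^ m * (1 - t) ^ n)
      ((m : ℝ) * (1 + t) ^ (m - 1) * 1 * (1 - t) ^ n
        + (1 + t) ^ m * ((n : ℝ) * (1 - t) ^ (n - 1) * -1)) t := (h1.pow m).mul (h2.pow n)
  convert this using 1
  ring

lemma deriv_mixed (m n : ℕ) :
    deriv (fun t : ℝ => (1 + t) ^ m * (1 - t) ^ n)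
      = fun t : ℝ => (m : ℝ) * ((1 + t) ^ (m - 1) * (1 - t) ^ n)
        - (n : ℝ) * ((1 + t) ^ m * (1 - t) ^ (n - 1)) :=
  funext fun t => (hasDerivAt_mixed m n t).deriv

/-- For every integer `p ≥ 2`, the polynomial `v(τ) = (1+τ)^(p+2) (1−τ)^(p−2)` satisfies the
homogeneous Bianchi transport equation in the sector `q = p` for the component `a₄`:
`(1−τ²) v'' + (−4 + 2(p−1)τ) v' + 2p v = 0` for all real `τ`. -/
theorem stmt_1 (p : ℕ) (hp : 2 ≤ p) :
    ∀ τ : ℝ,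
      (1 - τ ^ 2) * deriv (deriv (fun t : ℝ => (1 + t) ^ (p + 2) * (1 - t) ^ (p - 2))) τ
        + (-4 + 2 * ((p : ℝ) - 1) * τ) *
            deriv (fun t : ℝ => (1 + t) ^ (p + 2) * (1 - t) ^ (p - 2)) τ
        + 2 * (p : ℝ) * ((1 + τ) ^ (p + 2) * (1 - τ) ^ (p - 2)) = 0 := by
  intro τ
  obtain ⟨k, rfl⟩ : ∃ k, p = k + 2 := ⟨p - 2, by omega⟩
  have hsub : k + 2 - 2 = k := by omega
  rw [hsub, deriv_mixed]
  have h2 : HasDerivAt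
      (fun t : ℝ => ((k + 2 + 2 : ℕ) : ℝ) * ((1 + t) ^ (k + 2 + 2 - 1) * (1 - t) ^ k)
        - (k : ℝ) * ((1 + t) ^ (k + 2 + 2) * (1 - t) ^ (k - 1)))
      (((k + 2 + 2 : ℕ) : ℝ) *
          (((k + 3 : ℕ) : ℝ) * ((1 + τ) ^ (k + 2) * (1 - τ) ^ k)
            - (k : ℝ) * ((1 + τ) ^ (k + 3) * (1 - τ) ^ (k - 1)))
        - (k : ℝ) *
          (((k + 4 : ℕ) : ℝ) * ((1 + τ) ^ (k + 3) * (1 - τ) ^ (k - 1))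
            - ((k - 1 : ℕ) : ℝ) * ((1 + τ) ^ (k + 4) * (1 - τ) ^ (k - 1 - 1)))) τ :=
    ((hasDerivAt_mixed (k + 3) k τ).const_mul _).sub
      ((hasDerivAt_mixed (k + 4) (k - 1) τ).const_mul _)
  rw [h2.deriv]
  rcases k with _ | _ | k
  · push_cast; ring
  · push_cast; ring
  · push_cast; ring
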